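/- Let d ≤ n, let r ≥ 1 and μ₀ ≥ 1 be such that r < n and ℓ = d/(r·μ₀) is a positive integer, and let 𝒳 be the set of d×n real matrices of rank at most r whose column space U satisfies μ(U) ≤ μ₀. For every integer m, every probability distribution q over lists Ω of m entry indices from [d]×[n], and every (possibly randomized) estimator f mapping a pair (Ω, X_Ω) consisting of the observed index list and the corresponding matrix values to a d×n matrix, the worst-case error probability satisfies sup_{X ∈ 𝒳} P_{Ω∼q, f}[ f(Ω, X_Ω) ≠ X ] ≥ 1/2 − ⌈ m / ((1 − (r−1)/(r·μ₀))·d) ⌉ / (2·(n−r)). In particular, every passive (non-adaptive) sampling scheme with recovery probability bounded away from 1/2 over 𝒳 requires m = Ω((dn − dr)(1 + 1/(rμ₀) − 1/μ₀)) observations. -/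

import Mathlib

open Matrix
open scoped RealInnerProductSpace ENNReal

/-- Coherence μ(S) = (d/rank S)·max_i ‖P_S e_i‖₂² of a subspace S ⊆ ℝ^d. -/
noncomputable def submodCoh {d : ℕ} (S : Submodule ℝ (EuclideanSpace ℝ (Fin d))) : ℝ :=
  ((d : ℝ) / (Module.finrank ℝ S)) *
    ⨆ i : Fin d,
      ‖(Submodule.orthogonalProjectionOnto S (EuclideanSpace.single i 1) : EuclideanSpace ℝ (Fin d))‖ ^ 2

/-- The column space of a d×n matrix, as a subspace of ℝ^d. -/
noncomputable def colSpace {d n : ℕ} (X : Matrix (Fin d) (Fin n) ℝ) :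
    Submodule ℝ (EuclideanSpace ℝ (Fin d)) :=
  LinearMap.range (Matrix.toEuclideanLin X)

/-- Error probability of a (possibly randomized) estimator `f` that, given the sampled index
list Ω ~ q and the corresponding entry values X_Ω of the matrix X, outputs a random guess:
P_{Ω ∼ q, f}[ f(Ω, X_Ω) ≠ X ]. -/
noncomputable def errProb {d n : ℕ} {m : ℕ} (q : PMF (Fin m → Fin d × Fin n))
    (f : (Fin m → Fin d × Fin n) → (Fin m → ℝ) → PMF (Matrix (Fin d) (Fin n) ℝ))
    (X : Matrix (Fin d) (Fin n) ℝ) : ℝ :=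
  ((q.bind fun Ω => f Ω fun j => X (Ω j).1 (Ω j).2).toOuterMeasure {Y | Y ≠ X}).toReal

namespace PCLB

def blk (ℓ r i : ℕ) : ℕ := min (i / ℓ) (r - 1)

noncomputable def uvec (d r ℓ : ℕ) (σ : ℝ) (i0 : Fin d) (t : ℕ) :
    EuclideanSpace ℝ (Fin d) :=
  WithLp.toLp 2 fun i => if blk ℓ r (i : ℕ) = t then (if t = r - 1 ∧ i = i0 then σ else 1) else 0

noncomputable def Uspan (d r ℓ : ℕ) (σ : ℝ) (i0 : Fin d) :
    Submodule ℝ (EuclideanSpace ℝ (Fin d)) :=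
  Submodule.span ℝ (Set.range fun t : Fin r => uvec d r ℓ σ i0 (t : ℕ))

section
variable {d r ℓ : ℕ} {σ : ℝ} {i0 : Fin d}

lemma blk_lt (hr : 1 ≤ r) (i : ℕ) : blk ℓ r i < r := by
  have : blk ℓ r i ≤ r - 1 := min_le_right _ _
  omega

lemma uvec_sq (hσ : σ * σ = 1) (t : ℕ) (i : Fin d) :
    uvec d r ℓ σ i0 t i * uvec d r ℓ σ i0 t i = if blk ℓ r (i : ℕ) = t then 1 else 0 := by
  unfold uvec
  simp only [PiLp.toLp_apply]
  split_ifs with h1 h2 <;> simp [hσ]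

lemma uvec_ne (t : ℕ) (i : Fin d) (h : blk ℓ r (i : ℕ) ≠ t) : uvec d r ℓ σ i0 t i = 0 := by
  simp [uvec, h]

lemma inner_uvec (s t : ℕ) (hst : s ≠ t) :
    ⟪uvec d r ℓ σ i0 s, uvec d r ℓ σ i0 t⟫ = 0 := by
  rw [PiLp.inner_apply]
  apply Finset.sum_eq_zero
  intro i _
  rcases eq_or_ne (blk ℓ r (i : ℕ)) s with h | h
  · rw [uvec_ne t i (h ▸ hst)]; simp
  · rw [uvec_ne s i h]; simp

lemma inner_self_eq_sum (hσ : σ * σ = 1) (t : ℕ) :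
    ⟪uvec d r ℓ σ i0 t, uvec d r ℓ σ i0 t⟫
      = ∑ i : Fin d, (if blk ℓ r (i : ℕ) = t then (1:ℝ) else 0) := by
  rw [PiLp.inner_apply]
  exact Finset.sum_congr rfl fun i _ => by
    simpa [sq] using uvec_sq (r := r) (ℓ := ℓ) (i0 := i0) hσ t i

lemma le_inner_self (hσ : σ * σ = 1) (hℓ : 0 < ℓ) (hrl : r * ℓ ≤ d) {t : ℕ} (ht : t < r) :
    (ℓ : ℝ) ≤ ⟪uvec d r ℓ σ i0 t, uvec d r ℓ σ i0 t⟫ := by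
  rw [inner_self_eq_sum hσ, Finset.sum_boole]
  have hcard : ℓ ≤ (Finset.univ.filter fun i : Fin d => blk ℓ r (i : ℕ) = t).card := by
    have := Finset.card_le_card_of_injOn
      (f := fun a : Fin ℓ => (⟨t * ℓ + (a : ℕ), by
        have : t * ℓ + (a : ℕ) < (t + 1) * ℓ := by
          have := a.isLt; nlinarith
        have h2 : (t + 1) * ℓ ≤ r * ℓ := Nat.mul_le_mul_right _ (by omega)
        omega⟩ : Fin d))
      (s := (Finset.univ : Finset (Fin ℓ)))
      (t := Finset.univ.filter fun i : Fin d => blk ℓ r (i : ℕ) = t)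
      (by
        intro a _
        simp only [Finset.mem_filter, Finset.mem_univ, true_and]
        simp only [Finset.coe_filter, Finset.mem_univ, true_and, Set.mem_setOf_eq]
        show blk ℓ r (t * ℓ + (a : ℕ)) = t
        unfold blk
        have hdiv : (t * ℓ + (a : ℕ)) / ℓ = t := by
          rw [mul_comm, Nat.mul_add_div hℓ, Nat.div_eq_of_lt a.isLt]; omega
        rw [hdiv]
        omega)
      (by
        intro a _ b _ hab
        have : t * ℓ + (a : ℕ) = t * ℓ + (b : ℕ) := congrArg Fin.val hab
        exact Fin.ext (by omega))
    simpa using this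
  exact_mod_cast Nat.cast_le.mpr hcard

lemma uvec_nonzero (hσ : σ * σ = 1) (hℓ : 0 < ℓ) (hrl : r * ℓ ≤ d) {t : ℕ} (ht : t < r) :
    uvec d r ℓ σ i0 t ≠ 0 := by
  intro h
  have h2 := @le_inner_self d r ℓ σ i0 hσ hℓ hrl t ht
  rw [h] at h2
  simp at h2
  have : (0:ℝ) < ℓ := by exact_mod_cast hℓ
  linarith

lemma finrank_Uspan (hσ : σ * σ = 1) (hℓ : 0 < ℓ) (hrl : r * ℓ ≤ d) :
    Module.finrank ℝ (Uspan d r ℓ σ i0) = r := by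
  have hli : LinearIndependent ℝ (fun t : Fin r => uvec d r ℓ σ i0 (t : ℕ)) := by
    apply linearIndependent_of_ne_zero_of_inner_eq_zero
    · intro t; exact uvec_nonzero hσ hℓ hrl t.isLt
    · intro s t hst
      exact inner_uvec _ _ (fun h => hst (Fin.ext h))
  rw [Uspan, finrank_span_eq_card hli, Fintype.card_fin]

lemma proj_single (hσ : σ * σ = 1) (hℓ : 0 < ℓ) (hrl : r * ℓ ≤ d) (hr : 1 ≤ r) (i : Fin d) :
    (Submodule.orthogonalProjectionOnto (Uspan d r ℓ σ i0) (EuclideanSpace.single i 1) :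
        EuclideanSpace ℝ (Fin d))
      = (uvec d r ℓ σ i0 (blk ℓ r (i : ℕ)) i /
          ⟪uvec d r ℓ σ i0 (blk ℓ r (i : ℕ)), uvec d r ℓ σ i0 (blk ℓ r (i : ℕ))⟫) •
          uvec d r ℓ σ i0 (blk ℓ r (i : ℕ)) := by
  have hℓR : (0:ℝ) < ℓ := by exact_mod_cast hℓ
  have hcpos : (0:ℝ) < ⟪uvec d r ℓ σ i0 (blk ℓ r (i : ℕ)),
      uvec d r ℓ σ i0 (blk ℓ r (i : ℕ))⟫ :=
    lt_of_lt_of_le hℓR (le_inner_self hσ hℓ hrl (blk_lt hr (i : ℕ)))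
  rw [← Submodule.starProjection_apply]
  apply Submodule.eq_starProjection_of_mem_of_inner_eq_zero
  · exact Submodule.smul_mem _ _
      (Submodule.subset_span ⟨⟨blk ℓ r (i : ℕ), blk_lt hr _⟩, rfl⟩)
  · intro w hw
    induction hw using Submodule.span_induction with
    | mem x hx =>
      obtain ⟨s, rfl⟩ := hx
      show ⟪EuclideanSpace.single i 1 - _, uvec d r ℓ σ i0 ((s : ℕ))⟫ = 0
      rw [inner_sub_left, real_inner_smul_left]
      rcases eq_or_ne ((s : ℕ)) (blk ℓ r (i : ℕ)) with hs | hs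
      · rw [hs, div_mul_cancel₀ _ (ne_of_gt hcpos), EuclideanSpace.inner_single_left]
        simp
      · rw [inner_uvec _ _ (Ne.symm hs), EuclideanSpace.inner_single_left,
          uvec_ne _ _ (Ne.symm hs)]
        simp
    | zero => simp
    | add x y _ _ hx hy => rw [inner_add_right, hx, hy]; simp
    | smul a x _ hx => rw [inner_smul_right, hx]; simp

lemma proj_norm_sq_le (hσ : σ * σ = 1) (hℓ : 0 < ℓ) (hrl : r * ℓ ≤ d) (hr : 1 ≤ r) (i : Fin d) :
    ‖(Submodule.orthogonalProjectionOnto (Uspan d r ℓ σ i0) (EuclideanSpace.single i 1) :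
        EuclideanSpace ℝ (Fin d))‖ ^ 2 ≤ 1 / (ℓ : ℝ) := by
  rw [proj_single hσ hℓ hrl hr i]
  set t : ℕ := blk ℓ r (i : ℕ) with hT
  set c : ℝ := ⟪uvec d r ℓ σ i0 t, uvec d r ℓ σ i0 t⟫ with hc
  have hℓR : (0:ℝ) < ℓ := by exact_mod_cast hℓ
  have hcl : (ℓ:ℝ) ≤ c := le_inner_self hσ hℓ hrl (blk_lt hr (i : ℕ))
  have hcpos : (0:ℝ) < c := lt_of_lt_of_le hℓR hcl
  have hnorm : ‖uvec d r ℓ σ i0 t‖ ^ 2 = c := (real_inner_self_eq_norm_sq _).symm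
  have hsq : uvec d r ℓ σ i0 t i * uvec d r ℓ σ i0 t i = 1 := by
    rw [uvec_sq hσ, if_pos rfl]
  rw [norm_smul, mul_pow, hnorm]
  rw [Real.norm_eq_abs, sq_abs, div_pow]
  have : uvec d r ℓ σ i0 t i ^ 2 = 1 := by rw [sq]; exact hsq
  rw [this]
  have hgoal : 1 / c ^ 2 * c = 1 / c := by
    field_simp
  rw [hgoal]
  exact one_div_le_one_div_of_le hℓR hcl

end


noncomputable def Amat (d r ℓ : ℕ) (σ : ℝ) (i0 : Fin d) : Matrix (Fin d) (Fin r) ℝ :=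
  Matrix.of fun i t => uvec d r ℓ σ i0 (t : ℕ) i

noncomputable def Bmat (n r : ℕ) (j0 : Fin n) : Matrix (Fin r) (Fin n) ℝ :=
  Matrix.of fun t j =>
    if ((t : ℕ) < r - 1 ∧ (j : ℕ) = (t : ℕ)) ∨ ((t : ℕ) = r - 1 ∧ j = j0) then 1 else 0

noncomputable def Xmat (d n r ℓ : ℕ) (σ : ℝ) (i0 : Fin d) (j0 : Fin n) :
    Matrix (Fin d) (Fin n) ℝ :=
  Amat d r ℓ σ i0 * Bmat n r j0

lemma Xmat_apply {d n r ℓ : ℕ} (hr : 1 ≤ r) {j0 : Fin n} (hj0 : r - 1 ≤ (j0 : ℕ))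
    (σ : ℝ) (i0 : Fin d) (i : Fin d) (j : Fin n) :
    Xmat d n r ℓ σ i0 j0 i j =
      if j = j0 then uvec d r ℓ σ i0 (r - 1) i
      else if (j : ℕ) < r - 1 then uvec d r ℓ σ i0 (j : ℕ) i else 0 := by
  have hrr : r - 1 < r := by omega
  rw [Xmat, Matrix.mul_apply]
  by_cases hj : j = j0
  · rw [if_pos hj]
    rw [Finset.sum_eq_single (⟨r - 1, hrr⟩ : Fin r)]
    · have hB : Bmat n r j0 ⟨r - 1, hrr⟩ j = 1 := by simp [Bmat, hj]
      rw [hB, mul_one]; simp [Amat]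
    · intro t _ ht
      have hB : Bmat n r j0 t j = 0 := by
        have : ¬(((t : ℕ) < r - 1 ∧ (j : ℕ) = (t : ℕ)) ∨ ((t : ℕ) = r - 1 ∧ j = j0)) := by
          rintro (⟨h1, h2⟩ | ⟨h1, _⟩)
          · subst hj; omega
          · exact ht (by apply Fin.ext; simpa using h1)
        simp [Bmat, this]
      rw [hB, mul_zero]
    · simp
  · rw [if_neg hj]
    by_cases hlt : (j : ℕ) < r - 1
    · rw [if_pos hlt]
      rw [Finset.sum_eq_single (⟨(j : ℕ), lt_trans hlt hrr⟩ : Fin r)]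
      · have hB : Bmat n r j0 ⟨(j : ℕ), lt_trans hlt hrr⟩ j = 1 := by
          simp [Bmat, hlt]
        rw [hB, mul_one]; simp [Amat]
      · intro t _ ht
        have hB : Bmat n r j0 t j = 0 := by
          have : ¬(((t : ℕ) < r - 1 ∧ (j : ℕ) = (t : ℕ)) ∨ ((t : ℕ) = r - 1 ∧ j = j0)) := by
            rintro (⟨h1, h2⟩ | ⟨h1, h2⟩)
            · exact ht (by apply Fin.ext; simpa using h2.symm)
            · exact hj h2
          simp [Bmat, this]
        rw [hB, mul_zero]
      · simp
    · rw [if_neg hlt]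
      apply Finset.sum_eq_zero
      intro t _
      have hB : Bmat n r j0 t j = 0 := by
        have : ¬(((t : ℕ) < r - 1 ∧ (j : ℕ) = (t : ℕ)) ∨ ((t : ℕ) = r - 1 ∧ j = j0)) := by
          rintro (⟨h1, h2⟩ | ⟨h1, h2⟩)
          · omega
          · exact hj h2
        simp [Bmat, this]
      rw [hB, mul_zero]

lemma rank_Xmat_le {d n r ℓ : ℕ} (σ : ℝ) (i0 : Fin d) (j0 : Fin n) :
    (Xmat d n r ℓ σ i0 j0).rank ≤ r :=
  (Matrix.rank_mul_le_left _ _).trans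
    ((Matrix.rank_le_card_width _).trans (by simp))



lemma colSpace_eq_span_cols {d n : ℕ} (M : Matrix (Fin d) (Fin n) ℝ) :
    colSpace M = Submodule.span ℝ
      (Set.range fun j : Fin n => (WithLp.toLp 2 (fun i => M i j) : EuclideanSpace ℝ (Fin d))) := by
  apply le_antisymm
  · rintro x ⟨v, rfl⟩
    have : Matrix.toEuclideanLin M v =
        ∑ j : Fin n, (v j) • (WithLp.toLp 2 (fun i => M i j) : EuclideanSpace ℝ (Fin d)) := by
      ext i
      simp [Matrix.toEuclideanLin_apply, Matrix.mulVec, dotProduct, mul_comm]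
    rw [this]
    exact Submodule.sum_mem _ fun j _ =>
      Submodule.smul_mem _ _ (Submodule.subset_span ⟨j, rfl⟩)
  · rw [Submodule.span_le]
    rintro x ⟨j, rfl⟩
    refine ⟨WithLp.toLp 2 (Pi.single j 1), ?_⟩
    rw [Matrix.toEuclideanLin_apply_piLp_toLp, Matrix.mulVec_single_one]
    rfl


lemma colSpace_Xmat {d n r ℓ : ℕ} (hr : 1 ≤ r) {j0 : Fin n} (hj0 : r - 1 ≤ (j0 : ℕ))
    (σ : ℝ) (i0 : Fin d) :
    colSpace (Xmat d n r ℓ σ i0 j0) = Uspan d r ℓ σ i0 := by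
  rw [colSpace_eq_span_cols, Uspan]
  apply le_antisymm
  · rw [Submodule.span_le]
    rintro x ⟨j, rfl⟩
    show (WithLp.toLp 2 (fun i => Xmat d n r ℓ σ i0 j0 i j) : EuclideanSpace ℝ (Fin d)) ∈ _
    by_cases hj : j = j0
    · have hcol : (WithLp.toLp 2 (fun i => Xmat d n r ℓ σ i0 j0 i j) : EuclideanSpace ℝ (Fin d))
          = uvec d r ℓ σ i0 (r - 1) := by
        ext i; simp only [PiLp.toLp_apply]; rw [Xmat_apply hr hj0, if_pos hj]
      rw [hcol]
      exact Submodule.subset_span ⟨⟨r - 1, by omega⟩, rfl⟩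
    · by_cases hlt : (j : ℕ) < r - 1
      · have hcol : (WithLp.toLp 2 (fun i => Xmat d n r ℓ σ i0 j0 i j) : EuclideanSpace ℝ (Fin d))
            = uvec d r ℓ σ i0 ((j : ℕ)) := by
          ext i; simp only [PiLp.toLp_apply]; rw [Xmat_apply hr hj0, if_neg hj, if_pos hlt]
        rw [hcol]
        exact Submodule.subset_span ⟨⟨(j : ℕ), by omega⟩, rfl⟩
      · have hcol : (WithLp.toLp 2 (fun i => Xmat d n r ℓ σ i0 j0 i j) : EuclideanSpace ℝ (Fin d)) = 0 := by
          ext i; simp only [PiLp.toLp_apply]; rw [Xmat_apply hr hj0, if_neg hj, if_neg hlt]; rfl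
        rw [hcol]
        exact Submodule.zero_mem _
  · rw [Submodule.span_le]
    rintro x ⟨t, rfl⟩
    show uvec d r ℓ σ i0 ((t : ℕ)) ∈ _
    rcases eq_or_lt_of_le (show (t : ℕ) ≤ r - 1 from by have := t.isLt; omega) with heq | hlt
    · apply Submodule.subset_span
      refine ⟨j0, ?_⟩
      ext i
      show Xmat d n r ℓ σ i0 j0 i j0 = _
      rw [Xmat_apply hr hj0, if_pos rfl, ← heq]
    · apply Submodule.subset_span
      have hjlt : (t : ℕ) < n := lt_of_lt_of_le hlt (le_trans hj0 (le_of_lt j0.isLt))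
      refine ⟨⟨(t : ℕ), hjlt⟩, ?_⟩
      ext i
      show Xmat d n r ℓ σ i0 j0 i ⟨(t : ℕ), hjlt⟩ = _
      have hne : (⟨(t : ℕ), hjlt⟩ : Fin n) ≠ j0 := by
        intro h
        have : (t : ℕ) = (j0 : ℕ) := congrArg Fin.val h
        omega
      rw [Xmat_apply hr hj0, if_neg hne, if_pos hlt]

lemma submodCoh_Xmat_le {d n r ℓ : ℕ} {σ : ℝ} {i0 : Fin d} {j0 : Fin n} {μ₀ : ℝ}
    (hσ : σ * σ = 1) (hr : 1 ≤ r) (hℓ : 0 < ℓ) (hrl : r * ℓ ≤ d)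
    (hj0 : r - 1 ≤ (j0 : ℕ)) (hμ : (d : ℝ) = ℓ * (r * μ₀)) :
    submodCoh (colSpace (Xmat d n r ℓ σ i0 j0)) ≤ μ₀ := by
  rw [colSpace_Xmat hr hj0, submodCoh, finrank_Uspan hσ hℓ hrl]
  have hd0 : 0 < d := by
    have : 1 ≤ r * ℓ := Nat.one_le_iff_ne_zero.mpr (Nat.mul_ne_zero (by omega) (by omega))
    omega
  haveI : Nonempty (Fin d) := ⟨⟨0, hd0⟩⟩
  have hsup : (⨆ i : Fin d,
      ‖(Submodule.orthogonalProjectionOnto (Uspan d r ℓ σ i0) (EuclideanSpace.single i 1) :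
        EuclideanSpace ℝ (Fin d))‖ ^ 2) ≤ 1 / (ℓ : ℝ) :=
    ciSup_le fun i => proj_norm_sq_le hσ hℓ hrl hr i
  have hdr : (0:ℝ) ≤ (d : ℝ) / (r : ℕ) := by positivity
  calc ((d : ℝ) / ((r : ℕ) : ℝ)) * ⨆ i : Fin d,
      ‖(Submodule.orthogonalProjectionOnto (Uspan d r ℓ σ i0) (EuclideanSpace.single i 1) :
        EuclideanSpace ℝ (Fin d))‖ ^ 2
      ≤ ((d : ℝ) / ((r : ℕ) : ℝ)) * (1 / (ℓ : ℝ)) := by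
        exact mul_le_mul_of_nonneg_left hsup hdr
    _ = μ₀ := by
        rw [hμ]
        have h1 : ((r : ℕ) : ℝ) ≠ 0 := Nat.cast_ne_zero.mpr (by omega)
        have h2 : ((ℓ : ℕ) : ℝ) ≠ 0 := by
          exact_mod_cast ne_of_gt (by exact_mod_cast hℓ : (0:ℝ) < ℓ)
        field_simp


lemma pmf_two_point {α : Type*} (P : PMF α) {a b : α} (hab : a ≠ b) : P a + P b ≤ 1 := by
  classical
  have h := PMF.tsum_coe P
  calc P a + P b = ∑ x ∈ ({a, b} : Finset α), P x := by
        rw [Finset.sum_pair hab]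
    _ ≤ ∑' x, P x := ENNReal.sum_le_tsum _
    _ = 1 := h

lemma errProb_eq {d n m : ℕ} (q : PMF (Fin m → Fin d × Fin n))
    (f : (Fin m → Fin d × Fin n) → (Fin m → ℝ) → PMF (Matrix (Fin d) (Fin n) ℝ))
    (X : Matrix (Fin d) (Fin n) ℝ) :
    errProb q f X
      = 1 - ((q.bind fun Ω => f Ω fun j => X (Ω j).1 (Ω j).2) X).toReal := by
  classical
  set P := q.bind fun Ω => f Ω fun j => X (Ω j).1 (Ω j).2 with hP
  have h1 : P.toOuterMeasure {Y | Y ≠ X} = 1 - P X := by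
    rw [PMF.toOuterMeasure_apply]
    have hind : ∀ Y, Set.indicator {Y | Y ≠ X} P Y = if Y = X then 0 else P Y := by
      intro Y
      by_cases h : Y = X <;> simp [Set.indicator, h]
    rw [tsum_congr hind]
    have h2 := ENNReal.tsum_eq_add_tsum_ite (f := fun Y => P Y) X
    rw [PMF.tsum_coe] at h2
    refine ENNReal.eq_sub_of_add_eq (PMF.apply_ne_top P X) ?_
    rw [add_comm]
    convert h2.symm using 3
    funext b
    congr 1
  rw [errProb, h1, ENNReal.toReal_sub_of_le (PMF.coe_le_one P X) (by norm_num)]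
  simp

lemma err_pair {d n m : ℕ} (q : PMF (Fin m → Fin d × Fin n))
    (f : (Fin m → Fin d × Fin n) → (Fin m → ℝ) → PMF (Matrix (Fin d) (Fin n) ℝ))
    (X Y : Matrix (Fin d) (Fin n) ℝ) (x0 : Fin d × Fin n) (hXY : X ≠ Y)
    (hagree : ∀ i j, ((i, j) : Fin d × Fin n) ≠ x0 → X i j = Y i j) :
    1 - (∑' Ω, q Ω * (if ∃ t, Ω t = x0 then 1 else 0)).toReal
      ≤ errProb q f X + errProb q f Y := by
  classical
  set p : ℝ≥0∞ := ∑' Ω, q Ω * (if ∃ t, Ω t = x0 then 1 else 0) with hp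
  have hple : p ≤ 1 := by
    rw [hp]
    exact le_trans (ENNReal.tsum_le_tsum fun Ω => by
      split_ifs <;> simp) (PMF.tsum_coe q).le
  have hdata : ∀ Ω : Fin m → Fin d × Fin n, (¬ ∃ t, Ω t = x0) →
      (fun j => X (Ω j).1 (Ω j).2) = (fun j => Y (Ω j).1 (Ω j).2) := by
    intro Ω hΩ
    funext j
    apply hagree
    intro h
    exact hΩ ⟨j, by rw [← h]⟩
  set aX : ℝ≥0∞ := (q.bind fun Ω => f Ω fun j => X (Ω j).1 (Ω j).2) X with haX
  set aY : ℝ≥0∞ := (q.bind fun Ω => f Ω fun j => Y (Ω j).1 (Ω j).2) Y with haY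
  have key : aX + aY ≤ 1 + p := by
    rw [haX, haY, PMF.bind_apply, PMF.bind_apply, ← ENNReal.tsum_add]
    rw [hp]
    calc (∑' Ω, (q Ω * (f Ω fun j => X (Ω j).1 (Ω j).2) X
            + q Ω * (f Ω fun j => Y (Ω j).1 (Ω j).2) Y))
        ≤ ∑' Ω, (q Ω + q Ω * (if ∃ t, Ω t = x0 then 1 else 0)) := by
          apply ENNReal.tsum_le_tsum
          intro Ω
          by_cases hΩ : ∃ t, Ω t = x0
          · rw [if_pos hΩ, mul_one]
            have h1 : (f Ω fun j => X (Ω j).1 (Ω j).2) X ≤ 1 := PMF.coe_le_one _ _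
            have h2 : (f Ω fun j => Y (Ω j).1 (Ω j).2) Y ≤ 1 := PMF.coe_le_one _ _
            calc q Ω * (f Ω fun j => X (Ω j).1 (Ω j).2) X
                  + q Ω * (f Ω fun j => Y (Ω j).1 (Ω j).2) Y
                ≤ q Ω * 1 + q Ω * 1 :=
                  add_le_add (mul_le_mul_right h1 _) (mul_le_mul_right h2 _)
              _ = q Ω + q Ω := by rw [mul_one]
          · rw [if_neg hΩ, mul_zero, add_zero, hdata Ω hΩ, ← mul_add]
            calc q Ω * ((f Ω fun j => Y (Ω j).1 (Ω j).2) X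
                  + (f Ω fun j => Y (Ω j).1 (Ω j).2) Y)
                ≤ q Ω * 1 := mul_le_mul_right (pmf_two_point _ hXY) _
              _ = q Ω := mul_one _
      _ = 1 + ∑' Ω, q Ω * (if ∃ t, Ω t = x0 then 1 else 0) := by
          rw [ENNReal.tsum_add, PMF.tsum_coe]
  have haX1 : aX ≤ 1 := PMF.coe_le_one _ _
  have haY1 : aY ≤ 1 := PMF.coe_le_one _ _
  have hreal : aX.toReal + aY.toReal ≤ 1 + p.toReal := by
    have h1 : (aX + aY).toReal ≤ (1 + p).toReal := by
      apply ENNReal.toReal_mono _ key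
      exact ENNReal.add_ne_top.mpr ⟨by norm_num, ne_top_of_le_ne_top (by norm_num) hple⟩
    rw [ENNReal.toReal_add (ne_top_of_le_ne_top (by norm_num) haX1)
        (ne_top_of_le_ne_top (by norm_num) haY1)] at h1
    rw [ENNReal.toReal_add (by norm_num) (ne_top_of_le_ne_top (by norm_num) hple)] at h1
    simpa using h1
  rw [errProb_eq q f X, errProb_eq q f Y, ← haX, ← haY]
  linarith

lemma exists_low_hit {d n m : ℕ} (q : PMF (Fin m → Fin d × Fin n)) (L a : ℕ)
    (hL : L < d) (ha : a < n) :
    ∃ x0 : Fin d × Fin n, L ≤ (x0.1 : ℕ) ∧ a ≤ (x0.2 : ℕ) ∧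
      (∑' Ω, q Ω * (if ∃ t, Ω t = x0 then 1 else 0)).toReal
        ≤ (m : ℝ) / (((d - L : ℕ)) * ((n - a : ℕ))) := by
  classical
  set P : Finset (Fin d × Fin n) :=
    (Finset.univ.filter fun i : Fin d => L ≤ (i : ℕ)) ×ˢ
      (Finset.univ.filter fun j : Fin n => a ≤ (j : ℕ)) with hPdef
  set pE : Fin d × Fin n → ℝ≥0∞ :=
    fun x => ∑' Ω, q Ω * (if ∃ t, Ω t = x then 1 else 0) with hpE
  have hpE1 : ∀ x, pE x ≤ 1 := by
    intro x
    rw [hpE]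
    exact le_trans (ENNReal.tsum_le_tsum fun Ω => by split_ifs <;> simp) (PMF.tsum_coe q).le
  have hsum : ∑ x ∈ P, pE x ≤ (m : ℝ≥0∞) := by
    rw [hpE]
    rw [← Summable.tsum_finsetSum (fun x _ => ENNReal.summable)]
    calc ∑' Ω, ∑ x ∈ P, q Ω * (if ∃ t, Ω t = x then 1 else 0)
        ≤ ∑' Ω : Fin m → Fin d × Fin n, q Ω * (m : ℝ≥0∞) := by
          apply ENNReal.tsum_le_tsum
          intro Ω
          rw [← Finset.mul_sum]
          apply mul_le_mul_right
          rw [Finset.sum_boole]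
          have hsub : P.filter (fun x => ∃ t, Ω t = x) ⊆ Finset.univ.image Ω := by
            intro x hx
            obtain ⟨t, ht⟩ := (Finset.mem_filter.mp hx).2
            exact Finset.mem_image.mpr ⟨t, Finset.mem_univ t, ht⟩
          calc ((P.filter (fun x => ∃ t, Ω t = x)).card : ℝ≥0∞)
              ≤ ((Finset.univ.image Ω).card : ℝ≥0∞) := by
                exact_mod_cast Nat.cast_le.mpr (Finset.card_le_card hsub)
            _ ≤ (m : ℝ≥0∞) := by
                have := Finset.card_image_le (s := (Finset.univ : Finset (Fin m))) (f := Ω)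
                simp only [Finset.card_univ, Fintype.card_fin] at this
                exact_mod_cast Nat.cast_le.mpr this
      _ = (m : ℝ≥0∞) := by rw [ENNReal.tsum_mul_right, PMF.tsum_coe, one_mul]
  -- cardinality lower bound
  have hc1 : d - L ≤ (Finset.univ.filter fun i : Fin d => L ≤ (i : ℕ)).card := by
    have := Finset.card_le_card_of_injOn
      (f := fun b : Fin (d - L) => (⟨L + (b : ℕ), by omega⟩ : Fin d))
      (s := (Finset.univ : Finset (Fin (d - L))))
      (t := Finset.univ.filter fun i : Fin d => L ≤ (i : ℕ))
      (by intro b _; simp)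
      (by intro b _ c _ hbc
          have : L + (b : ℕ) = L + (c : ℕ) := congrArg Fin.val hbc
          exact Fin.ext (by omega))
    simpa using this
  have hc2 : n - a ≤ (Finset.univ.filter fun j : Fin n => a ≤ (j : ℕ)).card := by
    have := Finset.card_le_card_of_injOn
      (f := fun b : Fin (n - a) => (⟨a + (b : ℕ), by omega⟩ : Fin n))
      (s := (Finset.univ : Finset (Fin (n - a))))
      (t := Finset.univ.filter fun j : Fin n => a ≤ (j : ℕ))
      (by intro b _; simp)
      (by intro b _ c _ hbc
          have : a + (b : ℕ) = a + (c : ℕ) := congrArg Fin.val hbc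
          exact Fin.ext (by omega))
    simpa using this
  have hcard : (d - L) * (n - a) ≤ P.card := by
    rw [hPdef, Finset.card_product]
    exact Nat.mul_le_mul hc1 hc2
  have hPne : P.Nonempty := by
    refine ⟨(⟨L, hL⟩, ⟨a, ha⟩), ?_⟩
    rw [hPdef, Finset.mem_product]
    constructor <;> simp
  -- move to reals
  have hden : (0:ℝ) < ((d - L : ℕ) : ℝ) * ((n - a : ℕ) : ℝ) := by
    have h1 : 0 < d - L := by omega
    have h2 : 0 < n - a := by omega
    positivity
  have hsumR : ∑ x ∈ P, (pE x).toReal ≤ (m : ℝ) := by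
    have h1 : (∑ x ∈ P, pE x).toReal ≤ ((m : ℝ≥0∞)).toReal :=
      ENNReal.toReal_mono (by simp) hsum
    rwa [ENNReal.toReal_sum (fun x _ => ne_top_of_le_ne_top (by norm_num) (hpE1 x)),
      ENNReal.toReal_natCast] at h1
  have hsumR2 : ∑ x ∈ P, (pE x).toReal
      ≤ ∑ _x ∈ P, (m : ℝ) / (((d - L : ℕ)) * ((n - a : ℕ))) := by
    rw [Finset.sum_const, nsmul_eq_mul]
    calc ∑ x ∈ P, (pE x).toReal ≤ (m : ℝ) := hsumR
      _ = (((d - L : ℕ) : ℝ) * ((n - a : ℕ) : ℝ)) *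
            ((m : ℝ) / (((d - L : ℕ)) * ((n - a : ℕ)))) := by
          exact (mul_div_cancel₀ _ (ne_of_gt hden)).symm
      _ ≤ (P.card : ℝ) * ((m : ℝ) / (((d - L : ℕ)) * ((n - a : ℕ)))) := by
          apply mul_le_mul_of_nonneg_right _ (by positivity)
          exact_mod_cast hcard
  obtain ⟨x, hxP, hx⟩ := Finset.exists_le_of_sum_le hPne hsumR2
  rw [hPdef, Finset.mem_product] at hxP
  exact ⟨x, by simpa using (Finset.mem_filter.mp hxP.1).2,
    by simpa using (Finset.mem_filter.mp hxP.2).2, hx⟩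


end PCLB

/-- Theorem 2 (lower bound for passive matrix completion): let d ≤ n, 1 ≤ r < n, μ₀ ≥ 1 with
ℓ = d/(r·μ₀) a positive integer.  For every sampling budget m, every passive sampling
distribution q over lists of m entry indices, and every (possibly randomized) estimator f,
there is a d×n matrix X of rank at most r whose column space has coherence at most μ₀ on which
the probability of error is at least 1/2 − ⌈m/((1 − (r−1)/(r·μ₀))·d)⌉/(2·(n−r)).  (In
particular, the worst-case error probability over this class, i.e. its supremum, satisfies the
same bound, so any passive scheme with error bounded away from 1/2 needs
m = Ω((dn − dr)(1 + 1/(rμ₀) − 1/μ₀)) observations.) -/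
theorem passive_completion_lower_bound
    {d n r : ℕ} (hdn : d ≤ n) (hr : 1 ≤ r) (hrn : r < n)
    (μ₀ : ℝ) (hμ₀ : 1 ≤ μ₀)
    (ℓ : ℕ) (hℓ : 0 < ℓ) (hℓeq : (ℓ : ℝ) = d / (r * μ₀))
    (m : ℕ)
    (q : PMF (Fin m → Fin d × Fin n))
    (f : (Fin m → Fin d × Fin n) → (Fin m → ℝ) → PMF (Matrix (Fin d) (Fin n) ℝ)) :
    ∃ X : Matrix (Fin d) (Fin n) ℝ,
      X.rank ≤ r ∧ submodCoh (colSpace X) ≤ μ₀ ∧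
        (1 / 2 : ℝ) - (⌈(m : ℝ) / ((1 - ((r : ℝ) - 1) / (r * μ₀)) * d)⌉₊ : ℝ) /
            (2 * ((n : ℝ) - r)) ≤ errProb q f X := by
  classical
  have hrR : (0:ℝ) < r := by exact_mod_cast hr
  have hμpos : (0:ℝ) < μ₀ := lt_of_lt_of_le zero_lt_one hμ₀
  have hℓR : (0:ℝ) < ℓ := by exact_mod_cast hℓ
  have hd : (d:ℝ) = ℓ * (r * μ₀) := by rw [hℓeq]; field_simp
  have hrl : r * ℓ ≤ d := by
    have h1 : ((r * ℓ : ℕ) : ℝ) ≤ (d : ℝ) := by push_cast; nlinarith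
    exact_mod_cast h1
  have hLlt : (r - 1) * ℓ < d :=
    lt_of_lt_of_le ((Nat.mul_lt_mul_right hℓ).mpr (by omega)) hrl
  have hd0 : 0 < d := by
    have : 0 < r * ℓ := Nat.mul_pos (by omega) hℓ
    omega
  obtain ⟨x0, hx1, hx2, hp⟩ := PCLB.exists_low_hit q ((r-1)*ℓ) (r-1) hLlt (by omega)
  have hσp : (1:ℝ) * 1 = 1 := by norm_num
  have hσm : (-1:ℝ) * (-1) = 1 := by norm_num
  have hblk : PCLB.blk ℓ r ((x0.1 : Fin d) : ℕ) = r - 1 := by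
    have h1 : r - 1 ≤ ((x0.1 : Fin d) : ℕ) / ℓ := by
      rw [Nat.le_div_iff_mul_le hℓ]; exact hx1
    unfold PCLB.blk
    omega
  have hentry : ∀ σ : ℝ, PCLB.Xmat d n r ℓ σ x0.1 x0.2 x0.1 x0.2 = σ := by
    intro σ
    rw [PCLB.Xmat_apply hr hx2, if_pos rfl]
    show (if PCLB.blk ℓ r ((x0.1 : Fin d) : ℕ) = r - 1 then
      (if r - 1 = r - 1 ∧ x0.1 = x0.1 then σ else 1) else 0) = σ
    rw [if_pos hblk, if_pos ⟨rfl, rfl⟩]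
  have hne : PCLB.Xmat d n r ℓ 1 x0.1 x0.2 ≠ PCLB.Xmat d n r ℓ (-1) x0.1 x0.2 := by
    intro h
    have h2 := congrFun (congrFun h x0.1) x0.2
    rw [hentry 1, hentry (-1)] at h2
    norm_num at h2
  have hagree : ∀ i j, ((i, j) : Fin d × Fin n) ≠ x0 →
      PCLB.Xmat d n r ℓ 1 x0.1 x0.2 i j = PCLB.Xmat d n r ℓ (-1) x0.1 x0.2 i j := by
    intro i j hij
    rw [PCLB.Xmat_apply hr hx2, PCLB.Xmat_apply hr hx2]
    by_cases hj : j = x0.2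
    · rw [if_pos hj, if_pos hj]
      have hi : i ≠ x0.1 := by
        intro h
        exact hij (by rw [h, hj])
      show (if PCLB.blk ℓ r ((i : Fin d) : ℕ) = r - 1 then
          (if r - 1 = r - 1 ∧ i = x0.1 then (1:ℝ) else 1) else 0)
        = (if PCLB.blk ℓ r ((i : Fin d) : ℕ) = r - 1 then
          (if r - 1 = r - 1 ∧ i = x0.1 then (-1:ℝ) else 1) else 0)
      simp [hi]
    · rw [if_neg hj, if_neg hj]
      by_cases hlt : (j : ℕ) < r - 1
      · rw [if_pos hlt, if_pos hlt]
        have hne2 : ¬((j : ℕ) = r - 1) := by omega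
        simp [PCLB.uvec, hne2]
      · rw [if_neg hlt, if_neg hlt]
  have hpair := PCLB.err_pair q f _ _ x0 hne hagree
  -- arithmetic for the bound
  set k : ℕ := ⌈(m : ℝ) / ((1 - ((r : ℝ) - 1) / (r * μ₀)) * d)⌉₊ with hk
  have hcast : ((d - (r-1)*ℓ : ℕ) : ℝ) = (d:ℝ) - ((r:ℝ) - 1) * ℓ := by
    rw [Nat.cast_sub (le_of_lt hLlt), Nat.cast_mul, Nat.cast_sub hr]
    push_cast
    ring
  have hden : (1 - ((r:ℝ) - 1)/(r*μ₀)) * d = ((d - (r-1)*ℓ : ℕ) : ℝ) := by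
    rw [hcast, one_sub_mul]
    have h3 : ((r:ℝ)-1)/(r*μ₀)*d = ((r:ℝ)-1) * ℓ := by
      calc ((r:ℝ)-1)/(r*μ₀)*d = ((r:ℝ)-1) * ((d:ℝ)/(r*μ₀)) := by ring
        _ = ((r:ℝ)-1) * ℓ := by rw [← hℓeq]
    rw [h3]
  have hkge : (m:ℝ) / ((d - (r-1)*ℓ : ℕ) : ℝ) ≤ (k:ℝ) := by
    rw [← hden]
    exact Nat.le_ceil _
  have hspos : (0:ℝ) < ((d - (r-1)*ℓ : ℕ):ℝ) := by
    exact_mod_cast (by omega : 0 < d - (r-1)*ℓ)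
  have hnr1 : ((n - (r-1) : ℕ):ℝ) = (n:ℝ) - r + 1 := by
    rw [Nat.cast_sub (by omega : r - 1 ≤ n), Nat.cast_sub hr]
    push_cast
    ring
  have hnrpos : (0:ℝ) < (n:ℝ) - r := by
    have : (r:ℝ) < n := by exact_mod_cast hrn
    linarith
  set pR : ℝ := (∑' Ω, q Ω * (if ∃ t, Ω t = x0 then 1 else 0)).toReal with hpR
  have hchain : pR ≤ (k:ℝ)/((n:ℝ) - r) := by
    calc pR ≤ (m : ℝ) / (((d - (r-1)*ℓ : ℕ)) * ((n - (r-1) : ℕ))) := hp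
      _ = ((m:ℝ) / ((d - (r-1)*ℓ : ℕ):ℝ)) / ((n:ℝ) - r + 1) := by
          rw [div_div, hnr1]
      _ ≤ (k:ℝ) / ((n:ℝ) - r + 1) :=
          (div_le_div_iff_of_pos_right (by linarith : (0:ℝ) < (n:ℝ) - r + 1)).mpr hkge
      _ ≤ (k:ℝ) / ((n:ℝ) - r) := by
          gcongr
          linarith
  have heq2 : (k:ℝ)/(2*((n:ℝ)-r)) = ((k:ℝ)/((n:ℝ)-r))/2 := by
    rw [div_div, mul_comm]
  rcases le_total (errProb q f (PCLB.Xmat d n r ℓ 1 x0.1 x0.2))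
      (errProb q f (PCLB.Xmat d n r ℓ (-1) x0.1 x0.2)) with hc | hc
  · refine ⟨PCLB.Xmat d n r ℓ (-1) x0.1 x0.2, PCLB.rank_Xmat_le _ _ _,
      PCLB.submodCoh_Xmat_le hσm hr hℓ hrl hx2 hd, ?_⟩
    rw [heq2]
    linarith
  · refine ⟨PCLB.Xmat d n r ℓ 1 x0.1 x0.2, PCLB.rank_Xmat_le _ _ _,
      PCLB.submodCoh_Xmat_le hσp hr hℓ hrl hx2 hd, ?_⟩
    rw [heq2]
    linarith
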